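/- For the uniform multinomial random walk Y on weak compositions with d parts, the extended Martin kernel on the boundary (the probability simplex S(d)) is K(x, α) = d^m · ∏_{i=1}^d α_i^{x_i} for x = (x_1,…,x_d) ∈ 𝔽_m and α ∈ S(d); equivalently, if y_n ∈ 𝔽_{m_n}, m_n → ∞, and y_{ni}/m_n → α_i for each i, then K(x, y_n) → d^m ∏_i α_i^{x_i}. -/
import Mathlib


open Filter

/-- The Martin kernel of the uniform multinomial random walk on weak compositions
with d parts: K(x,y) = multinomial(n−m; y−x) · d^m / multinomial(n; y) for
x ≤ y componentwise (with m = Σx, n = Σy, m ≤ n), and 0 otherwise. -/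
noncomputable def multinomialMartinKernel (d : ℕ) (x y : Fin d → ℕ) : ℝ :=
  if (∀ i, x i ≤ y i) ∧ ∑ i, x i ≤ ∑ i, y i then
    ((Nat.multinomial Finset.univ (fun i => y i - x i) : ℝ) * (d : ℝ) ^ (∑ i, x i))
      / (Nat.multinomial Finset.univ y : ℝ)
  else 0

private lemma cast_sub_ge (a b : ℕ) : (a:ℝ) - b ≤ ((a - b : ℕ) : ℝ) := by
  rcases le_total b a with h | h
  · rw [Nat.cast_sub h]
  · have h' : (a:ℝ) ≤ b := by exact_mod_cast h
    have : (a:ℝ) - b ≤ 0 := by linarith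
    exact this.trans (Nat.cast_nonneg _)

private lemma div_le_div_r {a b c : ℝ} (h : a ≤ b) (hc : 0 ≤ c) : a / c ≤ b / c := by
  rcases hc.eq_or_lt with rfl | hc
  · simp
  · gcongr

/-- Key limit: if `a n / m n → α` and `m n → ∞`, then
`(a n).descFactorial k / (m n)^k → α ^ k`. -/
private lemma desc_div_pow_tendsto (a m : ℕ → ℕ) (α : ℝ) (k : ℕ)
    (hm : Tendsto m atTop atTop)
    (ha : Tendsto (fun n => (a n : ℝ) / (m n : ℝ)) atTop (nhds α)) :
    Tendsto (fun n => ((a n).descFactorial k : ℝ) / (m n : ℝ) ^ k)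
      atTop (nhds (α ^ k)) := by
  have hmr : Tendsto (fun n => (m n : ℝ)) atTop atTop :=
    tendsto_natCast_atTop_atTop.comp hm
  have hminv : Tendsto (fun n => ((m n : ℝ))⁻¹) atTop (nhds 0) :=
    hmr.inv_tendsto_atTop
  -- the shifted ratio also tends to α
  have L1 : Tendsto (fun n => ((a n : ℝ) + 1 - k) / (m n : ℝ)) atTop (nhds α) := by
    have h := ha.add (hminv.const_mul ((1:ℝ) - k))
    have h' : Tendsto (fun n => ((a n : ℝ) + 1 - k) / (m n : ℝ)) atTop
        (nhds (α + (1 - (k:ℝ)) * 0)) := by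
      refine h.congr fun n => ?_
      rw [div_eq_mul_inv, div_eq_mul_inv]
      ring
    simpa using h'
  have L2 : Tendsto (fun n => ((a n : ℝ) + 1) / (m n : ℝ)) atTop (nhds α) := by
    have h := ha.add (hminv.const_mul (1:ℝ))
    have h' : Tendsto (fun n => ((a n : ℝ) + 1) / (m n : ℝ)) atTop
        (nhds (α + 1 * 0)) := by
      refine h.congr fun n => ?_
      rw [div_eq_mul_inv, div_eq_mul_inv]
      ring
    simpa using h'
  have Lcast : Tendsto (fun n => ((a n + 1 - k : ℕ) : ℝ) / (m n : ℝ)) atTop (nhds α) := by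
    refine tendsto_of_tendsto_of_tendsto_of_le_of_le L1 L2 (fun n => ?_) (fun n => ?_)
    · refine div_le_div_r ?_ (Nat.cast_nonneg _)
      have := cast_sub_ge (a n + 1) k
      push_cast at this ⊢
      linarith
    · refine div_le_div_r ?_ (Nat.cast_nonneg _)
      have : ((a n + 1 - k : ℕ) : ℝ) ≤ ((a n + 1 : ℕ) : ℝ) := by
        exact_mod_cast Nat.sub_le _ _
      push_cast at this ⊢
      linarith
  refine tendsto_of_tendsto_of_tendsto_of_le_of_le (Lcast.pow k) ((ha.pow k))
    (fun n => ?_) (fun n => ?_)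
  · rw [div_pow, ← Nat.cast_pow]
    refine div_le_div_r ?_ (by positivity)
    exact_mod_cast Nat.pow_sub_le_descFactorial (a n) k
  · rw [div_pow, ← Nat.cast_pow]
    refine div_le_div_r ?_ (by positivity)
    exact_mod_cast Nat.descFactorial_le_pow (a n) k

/-- The extended Martin kernel on the boundary simplex S(d) is
K(x,α) = d^m ∏ α_i^{x_i}: if y_n ∈ 𝔽_{m_n}, m_n → ∞ and y_{ni}/m_n → α_i for each
i with α ∈ S(d), then K(x,y_n) → d^m ∏_i α_i^{x_i}. -/
theorem multinomial_walk_extended_martin_kernel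
    (d : ℕ) (hd : 0 < d)
    (y : ℕ → Fin d → ℕ) (m : ℕ → ℕ)
    (hdeg : ∀ n, ∑ i, y n i = m n)
    (hm : Tendsto m atTop atTop)
    (α : Fin d → ℝ) (hα : ∀ i, 0 ≤ α i) (hαsum : ∑ i, α i = 1)
    (hfreq : ∀ i, Tendsto (fun n => (y n i : ℝ) / (m n : ℝ)) atTop (nhds (α i)))
    (x : Fin d → ℕ) :
    Tendsto (fun n => multinomialMartinKernel d x (y n)) atTop
      (nhds ((d : ℝ) ^ (∑ i, x i) * ∏ i, α i ^ x i)) := by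
  classical
  set M := ∑ i, x i with hMdef
  set g : ℕ → ℝ := fun n =>
    (d:ℝ)^M * ((∏ i, ((y n i).descFactorial (x i) : ℝ) / (m n:ℝ) ^ (x i)) *
      (((m n).descFactorial M : ℝ) / (m n:ℝ) ^ M)⁻¹) with hgdef
  have hgt : Tendsto g atTop (nhds ((d:ℝ)^M * ((∏ i, α i ^ x i) * (1:ℝ)⁻¹))) := by
    apply Tendsto.const_mul
    apply Tendsto.mul
    · exact tendsto_finset_prod _ fun i _ =>
        desc_div_pow_tendsto (fun n => y n i) m (α i) (x i) hm (hfreq i)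
    · refine Tendsto.inv₀ ?_ one_ne_zero
      have hself : Tendsto (fun n => (m n : ℝ) / (m n : ℝ)) atTop (nhds 1) := by
        refine tendsto_const_nhds.congr' ?_
        filter_upwards [hm.eventually_ge_atTop 1] with n hn
        have hne : (m n : ℝ) ≠ 0 := Nat.cast_ne_zero.2 (by omega)
        exact (div_self hne).symm
      simpa using desc_div_pow_tendsto m m 1 M hm hself
  have hgt' : Tendsto g atTop (nhds ((d:ℝ)^M * ∏ i, α i ^ x i)) := by
    simpa using hgt
  refine hgt'.congr' ?_
  filter_upwards [hm.eventually_ge_atTop (max M 1)] with n hn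
  have hM1 : M ≤ m n := le_trans (le_max_left _ _) hn
  have h1 : 1 ≤ m n := le_trans (le_max_right _ _) hn
  have hmne : (m n : ℝ) ≠ 0 := Nat.cast_ne_zero.2 (by omega)
  have hQne : ((m n : ℝ)) ^ M ≠ 0 := pow_ne_zero _ hmne
  have hDpos : 0 < (m n).descFactorial M := Nat.pos_of_ne_zero fun h =>
    absurd (Nat.descFactorial_eq_zero_iff_lt.mp h) (by omega)
  have hDne : ((m n).descFactorial M : ℝ) ≠ 0 := Nat.cast_ne_zero.2 hDpos.ne'
  have hgn : g n = (d:ℝ)^M *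
      ((∏ i, ((y n i).descFactorial (x i) : ℝ)) / ((m n).descFactorial M : ℝ)) := by
    simp only [hgdef]
    rw [Finset.prod_div_distrib, Finset.prod_pow_eq_pow_sum, inv_div, div_mul_div_comm,
      mul_comm ((m n : ℝ) ^ M) (((m n).descFactorial M : ℝ)),
      mul_comm (∏ i, ((y n i).descFactorial (x i) : ℝ)) ((m n : ℝ) ^ ∑ i, x i)]
    rw [show ((m n : ℝ) ^ ∑ i, x i) = (m n : ℝ) ^ M from rfl]
    rw [mul_comm (((m n).descFactorial M : ℝ)) ((m n : ℝ) ^ M), mul_div_mul_left _ _ hQne]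
  by_cases hc : ∀ i, x i ≤ y n i
  · have hcond : (∀ i, x i ≤ y n i) ∧ ∑ i, x i ≤ ∑ i, y n i :=
      ⟨hc, by rw [hdeg n]; exact hMdef ▸ hM1⟩
    have hmultne : (Nat.multinomial Finset.univ (y n) : ℝ) ≠ 0 :=
      Nat.cast_ne_zero.2 (Nat.multinomial_pos _ _).ne'
    rw [hgn]
    simp only [multinomialMartinKernel]
    rw [if_pos hcond, ← hMdef, ← mul_div_assoc, div_eq_div_iff hDne hmultne]
    have hfac : ∀ i, (y n i - x i).factorial * (y n i).descFactorial (x i)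
        = (y n i).factorial := fun i => Nat.factorial_mul_descFactorial (hc i)
    have hprod : ∏ i, (y n i).factorial
        = (∏ i, (y n i - x i).factorial) * ∏ i, (y n i).descFactorial (x i) := by
      rw [← Finset.prod_mul_distrib]
      exact Finset.prod_congr rfl fun i _ => (hfac i).symm
    have hsum : ∑ i, (y n i - x i) = m n - M := by
      have h2 : ∑ i, (y n i - x i) + M = m n := by
        rw [hMdef, ← Finset.sum_add_distrib, ← hdeg n]
        exact Finset.sum_congr rfl fun i _ => Nat.sub_add_cancel (hc i)
      omega
    have spec1 : (∏ i, (y n i - x i).factorial) *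
        Nat.multinomial Finset.univ (fun i => y n i - x i) = (m n - M).factorial := by
      rw [Nat.multinomial_spec, hsum]
    have spec2 : (∏ i, (y n i).factorial) * Nat.multinomial Finset.univ (y n)
        = (m n).factorial := by rw [Nat.multinomial_spec, hdeg n]
    have desc2 : (m n - M).factorial * (m n).descFactorial M = (m n).factorial :=
      Nat.factorial_mul_descFactorial hM1
    have hB : 0 < ∏ i, (y n i - x i).factorial :=
      Finset.prod_pos fun i _ => Nat.factorial_pos _
    have key : d ^ M * (∏ i, (y n i).descFactorial (x i))
          * Nat.multinomial Finset.univ (y n)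
        = Nat.multinomial Finset.univ (fun i => y n i - x i) * d ^ M
          * (m n).descFactorial M := by
      refine Nat.eq_of_mul_eq_mul_left hB ?_
      calc (∏ i, (y n i - x i).factorial) * (d ^ M * (∏ i, (y n i).descFactorial (x i))
              * Nat.multinomial Finset.univ (y n))
          = d ^ M * (((∏ i, (y n i - x i).factorial)
              * ∏ i, (y n i).descFactorial (x i)) * Nat.multinomial Finset.univ (y n)) := by
            ring
        _ = d ^ M * ((∏ i, (y n i).factorial) * Nat.multinomial Finset.univ (y n)) := by
            rw [← hprod]
        _ = d ^ M * (m n).factorial := by rw [spec2]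
        _ = d ^ M * ((m n - M).factorial * (m n).descFactorial M) := by rw [desc2]
        _ = d ^ M * (((∏ i, (y n i - x i).factorial)
              * Nat.multinomial Finset.univ (fun i => y n i - x i))
              * (m n).descFactorial M) := by rw [spec1]
        _ = (∏ i, (y n i - x i).factorial)
              * (Nat.multinomial Finset.univ (fun i => y n i - x i) * d ^ M
              * (m n).descFactorial M) := by ring
    exact_mod_cast key
  · push_neg at hc
    obtain ⟨i, hi⟩ := hc
    have hzero : ((y n i).descFactorial (x i) : ℝ) = 0 := by
      rw [Nat.cast_eq_zero]
      exact Nat.descFactorial_eq_zero_iff_lt.2 hi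
    have hcond : ¬ ((∀ j, x j ≤ y n j) ∧ ∑ j, x j ≤ ∑ j, y n j) :=
      fun h => absurd (h.1 i) (not_le.2 hi)
    rw [hgn, Finset.prod_eq_zero (Finset.mem_univ i) hzero]
    simp only [multinomialMartinKernel]
    rw [if_neg hcond]
    simp
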